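/- Let f be a probability measure on ℝ³ with finite second moment, L = √(2 m₂(f)), and for ε ∈ (0,1) let φ_ε(x) = (2πε)^{-3/2} e^{-|x|²/(2ε)} and f^ε(x) = ∫_{ℝ³} φ_ε(v - x) f(dv). Then for every x ∈ ℝ³: (i) f^ε(x) ≥ φ_ε(|x| + L)/2, where φ_ε(r) denotes the value of φ_ε at any point of norm r; and (ii) J_ε(x) := (f^ε(x))^{-1} ∫_{ℝ³} |v| φ_ε(v - x) f(dv) ≤ 2|x| + 4√(m₂(f)). -/

import Mathlib

open Real Set MeasureTheory

set_option maxHeartbeats 1000000 in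
/-- For the Gaussian `φ_ε(x) = (2πε)^{-3/2} e^{-|x|²/(2ε)}`, `f ∈ 𝒫₂(ℝ³)`,
`L = √(2 m₂(f))` and `f^ε(x) = ∫ φ_ε(v-x) f(dv)`:
(i) `f^ε(x) ≥ φ_ε(|x|+L)/2`; (ii) `(f^ε(x))⁻¹ ∫ |v| φ_ε(v-x) f(dv) ≤ 2|x| + 4√(m₂(f))`. -/
theorem stmt12 (ε : ℝ) (hε : ε ∈ Set.Ioo (0 : ℝ) 1)
    (f : Measure (EuclideanSpace ℝ (Fin 3))) [IsProbabilityMeasure f]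
    (hm : Integrable (fun v => ‖v‖ ^ 2) f) (x : EuclideanSpace ℝ (Fin 3)) :
    ((2 * π * ε) ^ (-(3 : ℝ) / 2) *
        Real.exp (-(‖x‖ + Real.sqrt (2 * ∫ v, ‖v‖ ^ 2 ∂f)) ^ 2 / (2 * ε))) / 2
      ≤ ∫ v, (2 * π * ε) ^ (-(3 : ℝ) / 2) * Real.exp (-‖v - x‖ ^ 2 / (2 * ε)) ∂f ∧
    (∫ v, ‖v‖ * ((2 * π * ε) ^ (-(3 : ℝ) / 2) * Real.exp (-‖v - x‖ ^ 2 / (2 * ε))) ∂f)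
        / (∫ v, (2 * π * ε) ^ (-(3 : ℝ) / 2) * Real.exp (-‖v - x‖ ^ 2 / (2 * ε)) ∂f)
      ≤ 2 * ‖x‖ + 4 * Real.sqrt (∫ v, ‖v‖ ^ 2 ∂f) := by
  obtain ⟨hε0, -⟩ := hε
  have h2ε : (0:ℝ) < 2 * ε := by linarith
  set m2 : ℝ := ∫ v, ‖v‖ ^ 2 ∂f with hm2def
  have hm2 : 0 ≤ m2 := integral_nonneg fun v => sq_nonneg _
  set L : ℝ := Real.sqrt (2 * m2) with hLdef
  have hL0 : 0 ≤ L := Real.sqrt_nonneg _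
  have hLsq : L ^ 2 = 2 * m2 := Real.sq_sqrt (by linarith)
  set c : ℝ := (2 * π * ε) ^ (-(3:ℝ)/2) with hcdef
  have hc : 0 < c := Real.rpow_pos_of_pos (by positivity) _
  set φ : EuclideanSpace ℝ (Fin 3) → ℝ :=
    fun v => c * Real.exp (-‖v - x‖ ^ 2 / (2 * ε)) with hφdef
  have hφnn : ∀ v, 0 ≤ φ v := fun v => by
    simp only [hφdef]; positivity
  have hφle : ∀ v, φ v ≤ c := by
    intro v
    simp only [hφdef]
    nth_rewrite 2 [show c = c * 1 by ring]
    apply mul_le_mul_of_nonneg_left _ hc.le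
    rw [Real.exp_le_one_iff]
    apply div_nonpos_of_nonpos_of_nonneg _ h2ε.le
    simp [sq_nonneg]
  have hφcont : Continuous φ := by
    simp only [hφdef]; fun_prop
  have hφint : Integrable φ f := by
    apply Integrable.mono' (integrable_const c) hφcont.aestronglyMeasurable
    filter_upwards with v
    rw [Real.norm_eq_abs, abs_of_nonneg (hφnn v)]
    exact hφle v
  -- monotonicity of φ in ‖v-x‖
  have hφmono : ∀ (v : EuclideanSpace ℝ (Fin 3)) (r : ℝ), 0 ≤ r → ‖v - x‖ ≤ r →
      c * Real.exp (-r ^ 2 / (2 * ε)) ≤ φ v := by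
    intro v r hr hvr
    simp only [hφdef]
    apply mul_le_mul_of_nonneg_left _ hc.le
    rw [Real.exp_le_exp]
    apply div_le_div_of_nonneg_right _ h2ε.le
    have : ‖v - x‖ ^ 2 ≤ r ^ 2 := by nlinarith [norm_nonneg (v - x)]
    linarith
  have hφmono' : ∀ (v : EuclideanSpace ℝ (Fin 3)) (r : ℝ), 0 ≤ r → r ≤ ‖v - x‖ →
      φ v ≤ c * Real.exp (-r ^ 2 / (2 * ε)) := by
    intro v r hr hvr
    simp only [hφdef]
    apply mul_le_mul_of_nonneg_left _ hc.le
    rw [Real.exp_le_exp]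
    apply div_le_div_of_nonneg_right _ h2ε.le
    have : r ^ 2 ≤ ‖v - x‖ ^ 2 := by nlinarith
    linarith
  set K : ℝ := c * Real.exp (-(‖x‖ + L) ^ 2 / (2 * ε)) with hKdef
  have hK : 0 < K := by positivity
  -- Chebyshev
  set S : Set (EuclideanSpace ℝ (Fin 3)) := {v | ‖v‖ ≤ L} with hSdef
  have hSm : MeasurableSet S := (isClosed_le continuous_norm continuous_const).measurableSet
  have hcompl : (f Sᶜ).toReal ≤ 1/2 := by
    rcases eq_or_lt_of_le hm2 with h0 | hpos
    · have hae : ∀ᵐ v ∂f, (fun v => ‖v‖ ^ 2) v = 0 :=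
        (integral_eq_zero_iff_of_nonneg (fun v => sq_nonneg _) hm).mp h0.symm
      have hmem : ∀ᵐ v ∂f, v ∈ S := by
        filter_upwards [hae] with v hv
        have : ‖v‖ = 0 := by nlinarith [norm_nonneg v]
        simp only [hSdef, Set.mem_setOf_eq, this]
        exact hL0
      have : f Sᶜ = 0 := ae_iff.mp hmem
      simp [this]
    · have hconst : IntegrableOn (fun _ : EuclideanSpace ℝ (Fin 3) => 2 * m2) Sᶜ f :=
        (integrable_const _).integrableOn
      have h2' : ∫ v in Sᶜ, (2*m2) ∂f ≤ ∫ v in Sᶜ, ‖v‖^2 ∂f := by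
        apply setIntegral_mono_on hconst hm.integrableOn hSm.compl
        intro v hv
        have hvL : L < ‖v‖ := lt_of_not_ge hv
        nlinarith
      have h3 : ∫ v in Sᶜ, ‖v‖^2 ∂f ≤ m2 :=
        setIntegral_le_integral hm (Filter.Eventually.of_forall fun v => sq_nonneg _)
      rw [setIntegral_const, smul_eq_mul] at h2'
      simp only [Measure.real] at h2'
      nlinarith [ENNReal.toReal_nonneg (a := f Sᶜ)]
  have hS2 : 1/2 ≤ (f S).toReal := by
    have hadd : (f S).toReal + (f Sᶜ).toReal = 1 := by
      rw [← ENNReal.toReal_add (measure_ne_top f S) (measure_ne_top f Sᶜ),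
        measure_add_measure_compl hSm, measure_univ]
      simp
    linarith
  -- part (i)
  have hpart1 : K / 2 ≤ ∫ v, φ v ∂f := by
    have step1 : ∫ v in S, (K : ℝ) ∂f ≤ ∫ v in S, φ v ∂f := by
      apply setIntegral_mono_on (integrable_const _).integrableOn hφint.integrableOn hSm
      intro v hv
      have hvL : ‖v‖ ≤ L := hv
      have : ‖v - x‖ ≤ ‖x‖ + L := by
        calc ‖v - x‖ ≤ ‖v‖ + ‖x‖ := norm_sub_le v x
        _ ≤ ‖x‖ + L := by linarith
      exact hφmono v (‖x‖ + L) (by positivity) this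
    rw [setIntegral_const, smul_eq_mul] at step1
    simp only [Measure.real] at step1
    have step2 : ∫ v in S, φ v ∂f ≤ ∫ v, φ v ∂f :=
      setIntegral_le_integral hφint (Filter.Eventually.of_forall hφnn)
    nlinarith
  refine ⟨hpart1, ?_⟩
  -- part (ii)
  set D : ℝ := ∫ v, φ v ∂f with hDdef
  have hD : 0 < D := lt_of_lt_of_le (by positivity) hpart1
  have hK2D : K ≤ 2 * D := by linarith
  have hnormint : Integrable (fun v : EuclideanSpace ℝ (Fin 3) => ‖v‖) f := by
    apply Integrable.mono' (hm.add (integrable_const 1)) continuous_norm.aestronglyMeasurable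
    filter_upwards with v
    rw [Real.norm_eq_abs, abs_of_nonneg (norm_nonneg v)]
    simp only [Pi.add_apply]
    nlinarith [norm_nonneg v]
  have hnum : Integrable (fun v => ‖v‖ * φ v) f := by
    apply Integrable.mono' (hnormint.const_mul c)
      (continuous_norm.mul hφcont).aestronglyMeasurable
    filter_upwards with v
    simp only [Pi.mul_apply]
    rw [Real.norm_eq_abs, abs_of_nonneg (mul_nonneg (norm_nonneg v) (hφnn v))]
    calc ‖v‖ * φ v ≤ ‖v‖ * c := mul_le_mul_of_nonneg_left (hφle v) (norm_nonneg v)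
    _ = c * ‖v‖ := mul_comm _ _
  -- ∫‖v‖ ≤ √m2
  have hint1 : ∫ v, ‖v‖ ∂f ≤ Real.sqrt m2 := by
    rcases eq_or_lt_of_le hm2 with h0 | hpos
    · have hae : ∀ᵐ v ∂f, (fun v => ‖v‖ ^ 2) v = 0 :=
        (integral_eq_zero_iff_of_nonneg (fun v => sq_nonneg _) hm).mp h0.symm
      have : ∫ v, ‖v‖ ∂f = 0 := by
        rw [show (0:ℝ) = ∫ _ : EuclideanSpace ℝ (Fin 3), (0:ℝ) ∂f by simp]
        apply integral_congr_ae
        filter_upwards [hae] with v hv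
        nlinarith [norm_nonneg v]
      rw [this]
      positivity
    · set s : ℝ := Real.sqrt m2 with hsdef
      have hs : 0 < s := Real.sqrt_pos.mpr hpos
      have hssq : s ^ 2 = m2 := Real.sq_sqrt hm2
      have h1 : ∫ v, ‖v‖ ∂f ≤ ∫ v, (‖v‖^2 / s + s) / 2 ∂f := by
        apply integral_mono hnormint (((hm.div_const s).add (integrable_const s)).div_const 2)
        intro v
        show ‖v‖ ≤ (‖v‖ ^ 2 / s + s) / 2
        rw [le_div_iff₀ (by norm_num : (0:ℝ) < 2), ← sub_nonneg]
        rw [show ‖v‖ ^ 2 / s + s - ‖v‖ * 2 = (‖v‖ - s) ^ 2 / s by field_simp; ring]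
        positivity
      have h2 : ∫ v, (‖v‖^2 / s + s) / 2 ∂f = (m2 / s + s) / 2 := by
        rw [integral_div, integral_add (hm.div_const s) (integrable_const s),
          integral_div, integral_const]
        simp
        rfl
      rw [h2] at h1
      calc ∫ v, ‖v‖ ∂f ≤ (m2 / s + s) / 2 := h1
      _ = s := by field_simp; nlinarith
  -- split set
  set A : Set (EuclideanSpace ℝ (Fin 3)) := {v | ‖v - x‖ ≤ ‖x‖ + L} with hAdef
  have hAm : MeasurableSet A :=
    (isClosed_le (continuous_norm.comp (continuous_id.sub continuous_const))
      continuous_const).measurableSet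
  have hsplit : ∫ v, ‖v‖ * φ v ∂f
      = (∫ v in A, ‖v‖ * φ v ∂f) + ∫ v in Aᶜ, ‖v‖ * φ v ∂f :=
    (integral_add_compl hAm hnum).symm
  have hA : ∫ v in A, ‖v‖ * φ v ∂f ≤ (2*‖x‖+L) * D := by
    have step1 : ∫ v in A, ‖v‖ * φ v ∂f ≤ ∫ v in A, (2*‖x‖+L) * φ v ∂f := by
      apply setIntegral_mono_on hnum.integrableOn (hφint.const_mul _).integrableOn hAm
      intro v hv
      have hv' : ‖v - x‖ ≤ ‖x‖ + L := hv
      have : ‖v‖ ≤ 2*‖x‖+L := by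
        calc ‖v‖ = ‖v - x + x‖ := by rw [sub_add_cancel]
        _ ≤ ‖v - x‖ + ‖x‖ := norm_add_le _ _
        _ ≤ 2*‖x‖+L := by linarith
      exact mul_le_mul_of_nonneg_right this (hφnn v)
    have step2 : ∫ v in A, (2*‖x‖+L) * φ v ∂f = (2*‖x‖+L) * ∫ v in A, φ v ∂f :=
      integral_const_mul _ _
    have step3 : ∫ v in A, φ v ∂f ≤ D :=
      setIntegral_le_integral hφint (Filter.Eventually.of_forall hφnn)
    calc ∫ v in A, ‖v‖ * φ v ∂f ≤ (2*‖x‖+L) * ∫ v in A, φ v ∂f := by rw [← step2]; exact step1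
    _ ≤ (2*‖x‖+L) * D := mul_le_mul_of_nonneg_left step3 (by positivity)
  have hAc : ∫ v in Aᶜ, ‖v‖ * φ v ∂f ≤ K * Real.sqrt m2 := by
    have step1 : ∫ v in Aᶜ, ‖v‖ * φ v ∂f ≤ ∫ v in Aᶜ, ‖v‖ * K ∂f := by
      apply setIntegral_mono_on hnum.integrableOn (hnormint.mul_const _).integrableOn hAm.compl
      intro v hv
      have hv' : ‖x‖ + L ≤ ‖v - x‖ := le_of_lt (lt_of_not_ge hv)
      exact mul_le_mul_of_nonneg_left (hφmono' v (‖x‖ + L) (add_nonneg (norm_nonneg x) hL0) hv') (norm_nonneg v)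
    have step2 : ∫ v in Aᶜ, ‖v‖ * K ∂f ≤ ∫ v, ‖v‖ * K ∂f :=
      setIntegral_le_integral (hnormint.mul_const _)
        (Filter.Eventually.of_forall fun v => mul_nonneg (norm_nonneg v) hK.le)
    have step3 : ∫ v, ‖v‖ * K ∂f = (∫ v, ‖v‖ ∂f) * K := integral_mul_const _ _
    calc ∫ v in Aᶜ, ‖v‖ * φ v ∂f ≤ (∫ v, ‖v‖ ∂f) * K := by rw [← step3]; linarith
    _ ≤ Real.sqrt m2 * K := mul_le_mul_of_nonneg_right hint1 hK.le
    _ = K * Real.sqrt m2 := mul_comm _ _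
  have hL2 : L ≤ 2 * Real.sqrt m2 := by
    rw [hLdef, show (2:ℝ) * Real.sqrt m2 = Real.sqrt (4 * m2) by
      rw [show (4:ℝ) * m2 = 2^2 * m2 by ring, Real.sqrt_mul (by positivity), Real.sqrt_sq (by norm_num)]]
    exact Real.sqrt_le_sqrt (by linarith)
  have hN : ∫ v, ‖v‖ * φ v ∂f ≤ (2 * ‖x‖ + 4 * Real.sqrt m2) * D := by
    have hsm : 0 ≤ Real.sqrt m2 := Real.sqrt_nonneg _
    have : K * Real.sqrt m2 ≤ 2 * D * Real.sqrt m2 :=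
      mul_le_mul_of_nonneg_right hK2D hsm
    nlinarith
  rw [div_le_iff₀ hD]
  exact hN
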